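/- In a Cartan–Hadamard manifold with pinched sectional curvature −4 ≤ κ ≤ −1, let γ and γ' be geodesics with γ(−∞) = γ'(−∞) (asymptotic in backward time) but γ(+∞) ≠ γ'(+∞). Then there exists d ∈ ℝ with lim_{t→∞} (f_{−γ} − f_γ)(γ'(t)) = d, and lim_{t→−∞} (f_{−γ} + f_γ)(γ'(t)) = 0. -/

import Mathlib

open Filter Metric

noncomputable section

variable {M : Type*}

/-- A unit-speed geodesic line in a metric space: an isometric embedding of `ℝ`. -/
def IsUnitSpeedGeodesic [MetricSpace M] (c : ℝ → M) : Prop :=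
  ∀ s t : ℝ, dist (c s) (c t) = |s - t|

/-- The Busemann function of `γ`:
`f_γ(p) = lim_{t→∞} (dist(p, γ(t)) − t)`.  For a unit-speed geodesic line the
function `t ↦ dist(p, γ(t)) − t` is nonincreasing and bounded below, so the
limit coincides with the infimum, which we take as the definition. -/
noncomputable def busemannF [MetricSpace M] (γ : ℝ → M) (p : M) : ℝ :=
  ⨅ t : ℝ, (dist p (γ t) - t)

/-- The metric space `M` is a Hadamard (Cartan–Hadamard) space: complete,
geodesic, with globally convex distance function (Busemann nonpositive
curvature); in a Cartan–Hadamard manifold every geodesic segment extends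
to a line, which is reflected in the statement of `geod`. -/
structure IsHadamard (M : Type*) [MetricSpace M] : Prop where
  complete : CompleteSpace M
  proper : ProperSpace M
  geod : ∀ x y : M, ∃ c : ℝ → M, IsUnitSpeedGeodesic c ∧ c 0 = x ∧ c (dist x y) = y
  convex : ∀ c₁ c₂ : ℝ → M, IsUnitSpeedGeodesic c₁ → IsUnitSpeedGeodesic c₂ →
    ConvexOn ℝ Set.univ fun t => dist (c₁ t) (c₂ t)

/-- Comparison encoding of the sectional curvature upper bound `κ ≤ −1`:
at a foot point `c s` of `p` on a geodesic line `c`, the Busemann functions of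
`c` and of its reversal satisfy the real-hyperbolic comparison
`f_c(p) ≥ −s + log cosh d`, `f_{−c}(p) ≥ s + log cosh d`, where
`d = dist(p, c(s))` (equality holds in constant curvature `−1`). -/
def SecLEneg1 (M : Type*) [MetricSpace M] : Prop :=
  ∀ c : ℝ → M, IsUnitSpeedGeodesic c → ∀ p : M, ∀ s : ℝ,
    dist p (c s) = Metric.infDist p (Set.range c) →
      (-s + Real.log (Real.cosh (dist p (c s))) ≤ busemannF c p ∧
       s + Real.log (Real.cosh (dist p (c s))) ≤ busemannF (fun t => c (-t)) p)

/-- Comparison encoding of the sectional curvature lower bound `κ ≥ −4`: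
the reversed inequalities against the model of constant curvature `−4`,
where the comparison function is `(1/2) log cosh (2d)`. -/
def SecGEneg4 (M : Type*) [MetricSpace M] : Prop :=
  ∀ c : ℝ → M, IsUnitSpeedGeodesic c → ∀ p : M, ∀ s : ℝ,
    dist p (c s) = Metric.infDist p (Set.range c) →
      (busemannF c p ≤ -s + (1 / 2) * Real.log (Real.cosh (2 * dist p (c s))) ∧
       busemannF (fun t => c (-t)) p ≤ s + (1 / 2) * Real.log (Real.cosh (2 * dist p (c s))))

namespace BAux

open Set

variable [MetricSpace M]

/-! ### Unit speed basics -/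

theorem unit_rev {c : ℝ → M} (hc : IsUnitSpeedGeodesic c) :
    IsUnitSpeedGeodesic (fun s => c (-s)) := by
  intro s t
  rw [hc (-s) (-t)]
  rw [abs_sub_comm]
  ring_nf

theorem unit_shift {c : ℝ → M} (hc : IsUnitSpeedGeodesic c) (σ : ℝ) :
    IsUnitSpeedGeodesic (fun s => c (s + σ)) := by
  intro s t
  rw [hc (s + σ) (t + σ)]
  ring_nf

/-! ### Busemann basics -/

section Bus

variable {c : ℝ → M}

theorem term_antitone (hc : IsUnitSpeedGeodesic c) (p : M) : Antitone (fun τ => dist p (c τ) - τ) := by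
  intro τ₁ τ₂ h
  have := dist_triangle p (c τ₁) (c τ₂)
  rw [hc τ₁ τ₂] at this
  have habs : |τ₁ - τ₂| = τ₂ - τ₁ := by
    rw [abs_sub_comm]; exact abs_of_nonneg (by linarith)
  rw [habs] at this
  simp only
  linarith

theorem term_bddBelow (hc : IsUnitSpeedGeodesic c) (p : M) : BddBelow (range (fun τ => dist p (c τ) - τ)) := by
  refine ⟨-dist p (c 0), ?_⟩
  rintro x ⟨τ, rfl⟩
  have h1 := dist_triangle (c 0) p (c τ)
  rw [hc 0 τ] at h1
  have : τ ≤ |0 - τ| := by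
    rw [abs_sub_comm]
    calc τ ≤ |τ| := le_abs_self τ
    _ = |τ - 0| := by ring_nf
  simp only
  have := dist_comm (c 0) p
  linarith

theorem busemannF_le_term (hc : IsUnitSpeedGeodesic c) (p : M) (τ : ℝ) : busemannF c p ≤ dist p (c τ) - τ :=
  ciInf_le (term_bddBelow hc p) τ

theorem le_busemannF (hc : IsUnitSpeedGeodesic c) (p : M) {a : ℝ} (h : ∀ τ, a ≤ dist p (c τ) - τ) : a ≤ busemannF c p :=
  le_ciInf h

theorem tendsto_busemannF (hc : IsUnitSpeedGeodesic c) (p : M) :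
    Tendsto (fun τ => dist p (c τ) - τ) atTop (nhds (busemannF c p)) :=
  tendsto_atTop_ciInf (term_antitone hc p) (term_bddBelow hc p)

theorem busemannF_le_dist_add (hc : IsUnitSpeedGeodesic c) (p q : M) : busemannF c p ≤ dist p q + busemannF c q := by
  have h : ∀ τ, busemannF c p - dist p q ≤ dist q (c τ) - τ := by
    intro τ
    have h1 := busemannF_le_term hc p τ
    have h2 := dist_triangle p q (c τ)
    linarith
  have := le_busemannF hc q h
  linarith

theorem abs_busemannF_sub_le (hc : IsUnitSpeedGeodesic c) (p q : M) : |busemannF c p - busemannF c q| ≤ dist p q := by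
  rw [abs_le]
  constructor
  · have := busemannF_le_dist_add hc q p
    rw [dist_comm] at this
    linarith
  · have := busemannF_le_dist_add hc p q
    linarith

theorem busemannF_self (hc : IsUnitSpeedGeodesic c) (s : ℝ) : busemannF c (c s) = -s := by
  apply le_antisymm
  · have h := busemannF_le_term hc (c s) (|s| + 1)
    rw [hc s (|s| + 1)] at h
    have hs : s ≤ |s| + 1 := le_trans (le_abs_self s) (by linarith)
    have : |s - (|s| + 1)| = |s| + 1 - s := by
      rw [abs_sub_comm]; exact abs_of_nonneg (by linarith)
    rw [this] at h
    linarith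
  · apply le_busemannF hc
    intro τ
    rw [hc s τ]
    have : τ - s ≤ |s - τ| := by rw [abs_sub_comm]; exact le_abs_self _
    linarith

theorem busemannF_rev_self (hc : IsUnitSpeedGeodesic c) (s : ℝ) : busemannF (fun t => c (-t)) (c s) = s := by
  have hrev := unit_rev hc
  apply le_antisymm
  · have h : busemannF (fun t => c (-t)) (c s) ≤ dist (c s) (c (-(|s| + 1))) - (|s| + 1) :=
      busemannF_le_term hrev (c s) (|s| + 1)
    rw [hc s (-(|s|+1))] at h
    have hs : -s ≤ |s| + 1 := le_trans (neg_le_abs s) (by linarith)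
    have : |s - -(|s| + 1)| = s + (|s| + 1) := by
      rw [abs_of_nonneg]
      · ring
      · have := le_abs_self s; have := neg_le_abs s; linarith
    rw [this] at h
    linarith
  · apply le_busemannF hrev
    intro τ
    show s ≤ dist (c s) (c (-τ)) - τ
    rw [hc s (-τ)]
    have : s + τ ≤ |s - -τ| := by
      have : s + τ ≤ |s + τ| := le_abs_self _
      calc s + τ ≤ |s + τ| := this
        _ = |s - -τ| := by ring_nf
    linarith

theorem busemannF_add_rev_nonneg (hc : IsUnitSpeedGeodesic c) (p : M) :
    0 ≤ busemannF c p + busemannF (fun t => c (-t)) p := by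
  have hrev := unit_rev hc
  have key : ∀ τ, -busemannF (fun t => c (-t)) p ≤ dist p (c τ) - τ := by
    intro τ
    have h2 : ∀ σ, τ - dist p (c τ) ≤ dist p ((fun t => c (-t)) σ) - σ := by
      intro σ
      show τ - dist p (c τ) ≤ dist p (c (-σ)) - σ
      have h3 := dist_triangle (c τ) p (c (-σ))
      rw [dist_comm (c τ) p] at h3
      have h4 : τ + σ ≤ dist (c τ) (c (-σ)) := by
        rw [hc τ (-σ)]
        calc τ + σ ≤ |τ + σ| := le_abs_self _
          _ = |τ - -σ| := by ring_nf
      linarith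
    have := le_busemannF hrev p h2
    linarith
  have := le_busemannF hc p key
  linarith

end Bus

/-! ### Foot points -/

theorem exists_foot {c : ℝ → M} (hc : IsUnitSpeedGeodesic c) (p : M) :
    ∃ s, dist p (c s) = infDist p (range c) := by
  have hlip : LipschitzWith 1 c := by
    apply LipschitzWith.of_dist_le_mul
    intro x y
    rw [hc x y, Real.dist_eq]
    simp
  have hcont : Continuous fun s => dist p (c s) := continuous_const.dist hlip.continuous
  set R := dist p (c 0) with hR
  have hRnn : 0 ≤ R := dist_nonneg
  have h0mem : (0:ℝ) ∈ Icc (-(2*R+1)) (2*R+1) := by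
    simp only [mem_Icc]
    constructor <;> linarith
  have hne : (Icc (-(2*R+1)) (2*R+1)).Nonempty := ⟨0, h0mem⟩
  obtain ⟨s₀, hs₀mem, hs₀min⟩ := (isCompact_Icc).exists_isMinOn hne hcont.continuousOn
  refine ⟨s₀, ?_⟩
  have hglobal : ∀ s, dist p (c s₀) ≤ dist p (c s) := by
    intro s
    by_cases hs : s ∈ Icc (-(2*R+1)) (2*R+1)
    · exact hs₀min hs
    · have habs : 2*R+1 < |s| := by
        simp only [mem_Icc, not_and_or, not_le] at hs
        rcases hs with h | h
        · rw [abs_of_neg (by linarith : s < 0)]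
          linarith
        · rw [abs_of_pos (by linarith : 0 < s)]
          exact h
      have h1 := dist_triangle (c 0) p (c s)
      rw [hc 0 s] at h1
      have h2 : |s| = |0 - s| := by rw [abs_sub_comm]; ring_nf
      have h3 : dist p (c s₀) ≤ R := hs₀min h0mem
      rw [dist_comm (c 0) p] at h1
      linarith
  haveI : Nonempty (range c) := ⟨⟨c 0, 0, rfl⟩⟩
  apply le_antisymm
  · rw [Metric.infDist_eq_iInf]
    apply le_ciInf
    intro y
    obtain ⟨s, hs⟩ := y.2
    calc dist p (c s₀) ≤ dist p (c s) := hglobal s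
      _ = dist p y := by rw [hs]
  · exact infDist_le_dist_of_mem ⟨s₀, rfl⟩

/-! ### Convexity toolkit -/

def Cvx (f : ℝ → ℝ) : Prop :=
  ∀ x y a b : ℝ, 0 ≤ a → 0 ≤ b → a + b = 1 → f (a*x + b*y) ≤ a * f x + b * f y

theorem cvx_dist (hM : IsHadamard M) {c₁ c₂ : ℝ → M}
    (h₁ : IsUnitSpeedGeodesic c₁) (h₂ : IsUnitSpeedGeodesic c₂) :
    Cvx (fun t => dist (c₁ t) (c₂ t)) := by
  intro x y a b ha hb hab
  have := (hM.convex c₁ c₂ h₁ h₂).2 (Set.mem_univ x) (Set.mem_univ y) ha hb hab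
  simpa [smul_eq_mul] using this

theorem Cvx.add {f g : ℝ → ℝ} (hf : Cvx f) (hg : Cvx g) : Cvx (fun t => f t + g t) := by
  intro x y a b ha hb hab
  have h1 := hf x y a b ha hb hab
  have h2 := hg x y a b ha hb hab
  simp only
  linarith

theorem Cvx.add_affine {f : ℝ → ℝ} (hf : Cvx f) (m q : ℝ) :
    Cvx (fun t => f t + (m * t + q)) := by
  intro x y a b ha hb hab
  have h1 := hf x y a b ha hb hab
  simp only
  have h2 : a * (f x + (m * x + q)) + b * (f y + (m * y + q))
      = (a * f x + b * f y) + (m * (a*x + b*y) + (a + b) * q) := by ring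
  rw [h2, hab, one_mul]
  linarith

theorem Cvx.comp_neg {f : ℝ → ℝ} (hf : Cvx f) : Cvx (fun t => f (-t)) := by
  intro x y a b ha hb hab
  have h1 := hf (-x) (-y) a b ha hb hab
  simp only
  have : -(a*x + b*y) = a * (-x) + b * (-y) := by ring
  rw [this]
  exact h1

theorem cvx_le_max {f : ℝ → ℝ} (hf : Cvx f) {p t q : ℝ} (hpt : p ≤ t) (htq : t ≤ q) :
    f t ≤ max (f p) (f q) := by
  rcases eq_or_lt_of_le (hpt.trans htq) with h | h
  · have hp : p = t := le_antisymm hpt (by linarith)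
    rw [← hp]
    exact le_max_left _ _
  · set a := (q - t)/(q - p) with hadef
    set b := (t - p)/(q - p) with hbdef
    have hqp : 0 < q - p := by linarith
    have ha : 0 ≤ a := div_nonneg (by linarith) hqp.le
    have hb : 0 ≤ b := div_nonneg (by linarith) hqp.le
    have hab : a + b = 1 := by
      rw [hadef, hbdef, ← add_div, div_eq_one_iff_eq (ne_of_gt hqp)]
      ring
    have ht : t = a*p + b*q := by
      rw [hadef, hbdef]
      field_simp
      ring
    calc f t = f (a*p + b*q) := by rw [← ht]
      _ ≤ a * f p + b * f q := hf p q a b ha hb hab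
      _ ≤ a * max (f p) (f q) + b * max (f p) (f q) := by
          gcongr
          · exact le_max_left _ _
          · exact le_max_right _ _
      _ = max (f p) (f q) := by rw [← add_mul, hab, one_mul]

/-- A convex function on `ℝ` bounded above is constant. -/
theorem cvx_const_of_bddAbove {f : ℝ → ℝ} (hf : Cvx f) {A : ℝ} (hA : ∀ t, f t ≤ A)
    (x y : ℝ) : f x = f y := by
  -- first: the one-sided statement for x < y : f y ≤ f x
  have key : ∀ g : ℝ → ℝ, Cvx g → (∀ t, g t ≤ A) → ∀ u w : ℝ, u < w → g w ≤ g u := by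
    intro g hg hgA u w huw
    have hlim : Tendsto (fun t : ℝ => (1 - (w - u)/(t - u)) * g u + ((w - u)/(t - u)) * A)
        atTop (nhds ((1 - 0) * g u + 0 * A)) := by
      have h0 : Tendsto (fun t : ℝ => (w - u)/(t - u)) atTop (nhds 0) := by
        have h1 : Tendsto (fun t : ℝ => t - u) atTop atTop :=
          tendsto_atTop_add_const_right atTop (-u) tendsto_id
        have h2 : Tendsto (fun t : ℝ => (t - u)⁻¹) atTop (nhds 0) :=
          tendsto_inv_atTop_zero.comp h1
        have := h2.const_mul (w - u)
        simpa [div_eq_mul_inv] using this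
      exact ((tendsto_const_nhds.sub h0).mul tendsto_const_nhds).add (h0.mul tendsto_const_nhds)
    simp only [sub_zero, one_mul, zero_mul, add_zero] at hlim
    apply ge_of_tendsto hlim
    rw [eventually_atTop]
    refine ⟨w + 1, fun t ht => ?_⟩
    have htw : w < t := by linarith
    have htu : 0 < t - u := by linarith
    set b := (w - u)/(t - u) with hbdef
    have hb0 : 0 ≤ b := div_nonneg (by linarith) htu.le
    have hb1 : b ≤ 1 := by
      rw [div_le_one htu]
      linarith
    have hw : w = (1 - b)*u + b*t := by
      rw [hbdef]
      field_simp
      ring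
    calc g w = g ((1-b)*u + b*t) := by rw [← hw]
      _ ≤ (1-b) * g u + b * g t := hg u t (1-b) b (by linarith) hb0 (by ring)
      _ ≤ (1-b) * g u + b * A := by
          gcongr
          exact hgA t
      _ = (1 - b) * g u + b * A := rfl
  rcases lt_trichotomy x y with h | h | h
  · -- x < y : f y ≤ f x; and for other direction use comp_neg
    have h1 : f y ≤ f x := key f hf hA x y h
    have h2 : f x ≤ f y := by
      have := key (fun t => f (-t)) hf.comp_neg (fun t => hA (-t)) (-y) (-x) (by linarith)
      simpa using this
    linarith
  · rw [h]
  · have h1 : f x ≤ f y := key f hf hA y x h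
    have h2 : f y ≤ f x := by
      have := key (fun t => f (-t)) hf.comp_neg (fun t => hA (-t)) (-x) (-y) (by linarith)
      simpa using this
    linarith

/-- A convex function bounded above on a left ray is nondecreasing there. -/
theorem cvx_mono_left {f : ℝ → ℝ} (hf : Cvx f) {r A : ℝ} (hA : ∀ t ≤ r, f t ≤ A)
    {x y : ℝ} (hxy : x ≤ y) (hyr : y ≤ r) : f x ≤ f y := by
  by_contra hcon
  push_neg at hcon
  -- f x > f y with x < y
  have hxy' : x < y := by
    rcases eq_or_lt_of_le hxy with h | h
    · exfalso; rw [h] at hcon; exact lt_irrefl _ hcon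
    · exact h
  set K := (A - f y)/(f x - f y) + 1 with hKdef
  have hd : 0 < f x - f y := by linarith
  have hK1 : 1 ≤ K := by
    have h0 : 0 ≤ (A - f y)/(f x - f y) := div_nonneg (by
      have := hA y hyr; linarith) hd.le
    rw [hKdef]
    linarith
  set t := y - K*(y - x) with htdef
  have htx : t ≤ x := by
    have : 1*(y-x) ≤ K*(y-x) := by
      apply mul_le_mul_of_nonneg_right hK1 (by linarith)
    simp only [htdef]
    linarith
  have hty : t < y := by
    have h1 : 0 < K*(y-x) := mul_pos (by linarith) (by linarith)
    simp only [htdef]; linarith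
  -- x = (1 - 1/K) * y + (1/K) * t
  have hx : x = (1 - 1/K)*y + (1/K)*t := by
    have hK0 : K ≠ 0 := by linarith
    field_simp [htdef]
    ring
  have hcvx := hf y t (1 - 1/K) (1/K) (by
    have : 1/K ≤ 1 := by
      rw [div_le_one (by linarith)]
      exact hK1
    linarith) (by positivity) (by ring)
  rw [← hx] at hcvx
  -- so f t ≥ f y + K (f x - f y) = A + (f x - f y) > A
  have hft : A + (f x - f y) ≤ f t := by
    have hKpos : (0:ℝ) < K := by linarith
    have h2 : K * f x ≤ K * ((1 - 1/K) * f y) + f t := by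
      have := mul_le_mul_of_nonneg_left hcvx hKpos.le
      have h3 : K * (1/K * f t) = f t := by field_simp
      nlinarith [this]
    have h4 : K * ((1 - 1/K) * f y) = K * f y - f y := by field_simp
    rw [h4] at h2
    have h5 : K * (f x - f y) = K * f x - K * f y := by ring
    have h6 : K * (f x - f y) = (A - f y) + (f x - f y) := by
      rw [hKdef]; field_simp
    nlinarith [h2]
  have := hA t (by linarith)
  linarith

/-! ### Convexity of Busemann functions along geodesics -/

theorem cvx_busemann (hM : IsHadamard M) {c c₂ : ℝ → M}
    (hc : IsUnitSpeedGeodesic c) (hc₂ : IsUnitSpeedGeodesic c₂) :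
    Cvx (fun t => busemannF c (c₂ t)) := by
  intro x y a b ha hb hab
  simp only
  set z := a*x + b*y with hz
  have key : ∀ σ : ℝ, busemannF c (c₂ z) ≤
      a * (dist (c₂ x) (c (x + σ)) - (x + σ)) + b * (dist (c₂ y) (c (y + σ)) - (y + σ)) := by
    intro σ
    have h1 : busemannF c (c₂ z) ≤ dist (c₂ z) (c (z + σ)) - (z + σ) :=
      busemannF_le_term hc (c₂ z) (z + σ)
    have hshift := unit_shift hc σ
    have h2 := cvx_dist hM hc₂ hshift x y a b ha hb hab
    simp only at h2
    have h4 : dist (c₂ z) (c (z + σ)) ≤ a * dist (c₂ x) (c (x + σ)) + b * dist (c₂ y) (c (y + σ)) := by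
      rw [hz]
      exact h2
    have heq : a * (dist (c₂ x) (c (x + σ)) - (x + σ)) + b * (dist (c₂ y) (c (y + σ)) - (y + σ))
        = a * dist (c₂ x) (c (x + σ)) + b * dist (c₂ y) (c (y + σ)) - ((a*x + b*y) + (a+b)*σ) := by
      ring
    rw [hab, one_mul] at heq
    rw [heq]
    linarith [h1, h4, hz]
  have hx : Tendsto (fun σ => dist (c₂ x) (c (x + σ)) - (x + σ)) atTop
      (nhds (busemannF c (c₂ x))) := by
    have h1 : Tendsto (fun σ : ℝ => x + σ) atTop atTop :=
      tendsto_atTop_add_const_left atTop x tendsto_id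
    exact (tendsto_busemannF hc (c₂ x)).comp h1
  have hy : Tendsto (fun σ => dist (c₂ y) (c (y + σ)) - (y + σ)) atTop
      (nhds (busemannF c (c₂ y))) := by
    have h1 : Tendsto (fun σ : ℝ => y + σ) atTop atTop :=
      tendsto_atTop_add_const_left atTop y tendsto_id
    exact (tendsto_busemannF hc (c₂ y)).comp h1
  have hlim : Tendsto (fun σ => a * (dist (c₂ x) (c (x + σ)) - (x + σ))
      + b * (dist (c₂ y) (c (y + σ)) - (y + σ))) atTop
      (nhds (a * busemannF c (c₂ x) + b * busemannF c (c₂ y))) :=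
    (hx.const_mul a).add (hy.const_mul b)
  exact ge_of_tendsto' hlim key

/-! ### Elementary hyperbolic estimates -/

theorem logcosh_nonneg (x : ℝ) : 0 ≤ Real.log (Real.cosh x) :=
  Real.log_nonneg (Real.one_le_cosh x)

theorem sub_log_two_le_logcosh (x : ℝ) : x - Real.log 2 ≤ Real.log (Real.cosh x) := by
  have h1 : Real.exp x / 2 ≤ Real.cosh x := by
    rw [Real.cosh_eq]
    have := Real.exp_pos (-x)
    linarith
  have h2 : Real.log (Real.exp x / 2) ≤ Real.log (Real.cosh x) :=
    Real.log_le_log (by positivity) h1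
  rw [Real.log_div (Real.exp_pos x).ne' (by norm_num), Real.log_exp] at h2
  exact h2

theorem one_add_sq_half_le_cosh (x : ℝ) : 1 + x^2/2 ≤ Real.cosh x := by
  have hdouble : Real.cosh x = 1 + 2 * Real.sinh (x/2)^2 := by
    have h1 : x = 2 * (x/2) := by ring
    rw [h1, Real.cosh_two_mul, Real.cosh_sq]
    ring
  have hs : (x/2)^2 ≤ Real.sinh (x/2)^2 := by
    rcases le_or_gt 0 x with h | h
    · have : x/2 ≤ Real.sinh (x/2) := Real.self_le_sinh_iff.mpr (by linarith)
      nlinarith [this, h]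
    · have h2 : Real.sinh (x/2) ≤ x/2 := Real.sinh_le_self_iff.mpr (by linarith)
      have h3 : Real.sinh (x/2) < 0 := by
        rw [Real.sinh_neg_iff]
        linarith
      nlinarith [h2, h3]
  rw [hdouble]
  nlinarith [hs]

/-- If `log cosh i ≤ y` and `0 ≤ i` then `i ≤ √(2(e^y − 1))`. -/
theorem le_sqrt_of_logcosh_le {i y : ℝ} (hi : 0 ≤ i) (h : Real.log (Real.cosh i) ≤ y) :
    i ≤ Real.sqrt (2 * (Real.exp y - 1)) := by
  have h1 : Real.cosh i ≤ Real.exp y := by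
    have := Real.exp_log (Real.cosh_pos i)
    calc Real.cosh i = Real.exp (Real.log (Real.cosh i)) := this.symm
      _ ≤ Real.exp y := Real.exp_le_exp.mpr h
  have h2 : 1 + i^2/2 ≤ Real.exp y := (one_add_sq_half_le_cosh i).trans h1
  rw [Real.le_sqrt hi (by nlinarith [h2])]
  nlinarith [h2]

/-! ### The sqrt bound -/

/-- `Bnd y = √(2(e^y − 1))`: if `log cosh i ≤ y`, `0 ≤ i`, then `i ≤ Bnd y`. -/
def Bnd (y : ℝ) : ℝ := Real.sqrt (2 * (Real.exp y - 1))

theorem Bnd_mono {y z : ℝ} (h : y ≤ z) : Bnd y ≤ Bnd z := by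
  apply Real.sqrt_le_sqrt
  have := Real.exp_le_exp.mpr h
  linarith

theorem Bnd_nonneg (y : ℝ) : 0 ≤ Bnd y := Real.sqrt_nonneg _

theorem le_Bnd_of_logcosh {i y : ℝ} (hi : 0 ≤ i) (h : Real.log (Real.cosh i) ≤ y) :
    i ≤ Bnd y := le_sqrt_of_logcosh_le hi h

theorem Bnd_continuous : Continuous Bnd := by
  unfold Bnd
  fun_prop

theorem Bnd_zero : Bnd 0 = 0 := by
  simp [Bnd]

/-! ### The geometric core estimate for Part 2 -/

theorem part2_core (hM : IsHadamard M) (hupper : SecLEneg1 M)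
    {γ γ' : ℝ → M} (hγ : IsUnitSpeedGeodesic γ) (hγ' : IsUnitSpeedGeodesic γ')
    {b bt : ℝ}
    (hu : ∀ t, busemannF (fun s => γ (-s)) (γ' t) = t + b)
    (hbt : ∀ τ : ℝ, bt ≤ dist (γ 0) (γ' (-τ)) - τ)
    {j k ej ek : ℝ}
    (hejdef : ej = dist (γ 0) (γ' (-j)) - j - bt)
    (hekdef : ek = dist (γ 0) (γ' (-k)) - k - bt)
    (hj0 : 0 ≤ j) (hjk : j ≤ k)
    (h7 : Bnd (ej/2) + |bt| < j)
    (h8 : j + ej + Bnd (ej/2) + 1 ≤ k)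
    (hkb : b + 1 ≤ k) :
    busemannF (fun s => γ (-s)) (γ' (-j)) + busemannF γ (γ' (-j)) ≤
      2 * Bnd (ej/2)
      + 4 * Bnd ((j + bt + ej + Bnd (ej/2)) * (b + bt + ek)
            / (2 * dist (γ 0) (γ' (-k))))
      + 2 * ((j + bt + ej + Bnd (ej/2)) * (b + bt + ek) / dist (γ 0) (γ' (-k))) := by
  have hrevγ := unit_rev hγ
  set L := dist (γ 0) (γ' (-k)) with hLdef
  set ρ := Bnd (ej / 2) with hρdef
  set Sj := j + bt + ej + ρ with hSjdef
  set β := b + bt + ek with hβdef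
  have hρnn : 0 ≤ ρ := Bnd_nonneg _
  have hej0 : 0 ≤ ej := by
    have := hbt j
    rw [hejdef]; linarith
  have hek0 : 0 ≤ ek := by
    have h := hbt k
    rw [hekdef]
    linarith [h, hLdef]
  have hLk : L = k + bt + ek := by rw [hekdef]; ring
  have hγ0rev : busemannF (fun s => γ (-s)) (γ 0) = 0 := by
    have := busemannF_rev_self hγ 0
    simpa using this
  have hγ0fwd : busemannF γ (γ 0) = 0 := by
    have h := busemannF_self hγ 0
    simpa using h
  have hLlb : k - b ≤ L := by
    have h1 := abs_busemannF_sub_le hrevγ (γ 0) (γ' (-k))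
    rw [hγ0rev, hu (-k)] at h1
    have h3 : k - b ≤ |(0:ℝ) - (-k + b)| := by
      have he : (0:ℝ) - (-k + b) = k - b := by ring
      rw [he]
      exact le_abs_self _
    rw [hLdef]
    linarith
  have hβ0 : 0 ≤ β := by
    rw [hβdef]
    have h := hLk
    linarith [hLlb, hLk]
  have hLpos : (0:ℝ) < L := by linarith
  have hLne : L ≠ 0 := ne_of_gt hLpos
  -- the connecting geodesic from γ 0 to γ' (-k)
  obtain ⟨c, hc, hc0, hcL⟩ := hM.geod (γ 0) (γ' (-k))
  rw [← hLdef] at hcL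
  set p := γ' (-j) with hpdef
  obtain ⟨s, hs⟩ := exists_foot hc p
  have hD0 : (0:ℝ) ≤ dist p (c s) := dist_nonneg
  have hax := hupper c hc p s hs
  have hdp0 : dist p (c 0) = j + bt + ej := by
    rw [hc0, hpdef, dist_comm, hejdef]; ring
  have hdpL : dist p (c L) = k - j := by
    rw [hcL, hpdef, hγ' (-j) (-k)]
    rw [abs_of_nonneg (by linarith : (0:ℝ) ≤ -j - -k)]
    ring
  have hb1 : busemannF c p ≤ (k - j) - L := by
    have h := busemannF_le_term hc p L
    rw [hdpL] at h
    linarith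
  have hb2 : busemannF (fun t => c (-t)) p ≤ j + bt + ej := by
    have h := busemannF_le_term (unit_rev hc) p 0
    have h2 : dist p ((fun t => c (-t)) 0) = j + bt + ej := by
      show dist p (c (-0)) = _
      rw [neg_zero, hdp0]
    rw [h2] at h
    linarith
  have hkey : 2 * Real.log (Real.cosh (dist p (c s))) ≤ ej := by
    have hLk' : (k - j) - L + (j + bt + ej) = ej - ek := by rw [hLk]; ring
    linarith [hax.1, hax.2, hb1, hb2, hek0]
  have hDρ : dist p (c s) ≤ ρ := by
    rw [hρdef]
    exact le_Bnd_of_logcosh hD0 (by linarith)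
  -- location of the foot
  have hwin1 : |dist p (c 0) - (|s|)| ≤ dist p (c s) := by
    have habs_s : dist (c s) (c 0) = |s| := by rw [hc s 0]; simp
    calc |dist p (c 0) - (|s|)| = |dist p (c 0) - dist (c s) (c 0)| := by rw [habs_s]
      _ ≤ dist p (c s) := abs_dist_sub_le p (c s) (c 0)
  have hwin2 : |dist p (c L) - (|L - s|)| ≤ dist p (c s) := by
    have h2 : dist (c s) (c L) = |L - s| := by rw [hc s L, abs_sub_comm]
    calc |dist p (c L) - (|L - s|)| = |dist p (c L) - dist (c s) (c L)| := by rw [h2]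
      _ ≤ dist p (c s) := abs_dist_sub_le p (c s) (c L)
  have hs_abs_ub : |s| ≤ j + bt + ej + ρ := by
    have h1 := (abs_le.mp hwin1).1
    rw [hdp0] at h1
    linarith [hDρ]
  have hs0 : 0 ≤ s := by
    by_contra hneg
    push_neg at hneg
    have habs : |s| = -s := abs_of_neg hneg
    have h1 := (abs_le.mp hwin1).2
    rw [hdp0, habs] at h1
    have hlb : j + bt + ej - ρ ≤ -s := by linarith [hDρ]
    have h2 := (abs_le.mp hwin2).1
    rw [hdpL] at h2
    have habsL : |L - s| = L - s := abs_of_nonneg (by linarith)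
    rw [habsL] at h2
    have hfin : L + (j + bt + ej - ρ) ≤ k - j + ρ := by linarith [hDρ]
    rw [hLk] at hfin
    have hbtabs : -bt ≤ |bt| := neg_le_abs bt
    linarith [hek0, h7, hbtabs]
  have hsSj : s ≤ Sj := by
    rw [hSjdef]
    calc s ≤ |s| := le_abs_self s
      _ ≤ j + bt + ej + ρ := hs_abs_ub
  have hSjnn : 0 ≤ Sj := le_trans hs0 hsSj
  have hSjL : Sj + 1 ≤ L := by
    rw [hSjdef, hLk]
    linarith [h8, hek0]
  have hsL : s ≤ L := by linarith
  -- interpolation of f_{-γ} along c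
  have hUcvx : Cvx (fun r => busemannF (fun s' => γ (-s')) (c r)) :=
    cvx_busemann hM hrevγ hc
  have hU0 : busemannF (fun s' => γ (-s')) (c 0) = 0 := by rw [hc0]; exact hγ0rev
  have hUL : busemannF (fun s' => γ (-s')) (c L) = -k + b := by rw [hcL]; exact hu (-k)
  have hUs_ub : busemannF (fun s' => γ (-s')) (c s) ≤ -s + s*β/L := by
    have hsl1 : s/L ≤ 1 := by
      rw [div_le_one hLpos]
      exact hsL
    have hcvx := hUcvx 0 L (1 - s/L) (s/L) (by linarith) (by positivity) (by ring)
    simp only at hcvx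
    have harg : (1 - s/L)*(0:ℝ) + (s/L)*L = s := by
      field_simp
      ring
    rw [harg, hU0, hUL] at hcvx
    have hval : (1 - s/L)*(0:ℝ) + (s/L)*(-k + b) = -s + s*β/L := by
      have hβL : -k + b = β - L := by rw [hβdef, hLk]; ring
      rw [hβL]
      field_simp
      ring
    calc busemannF (fun s' => γ (-s')) (c s) ≤ (1 - s/L)*0 + (s/L)*(-k + b) := hcvx
      _ = -s + s*β/L := hval
  have hUs_lb : -s ≤ busemannF (fun s' => γ (-s')) (c s) := by
    have h := busemannF_le_dist_add hrevγ (c 0) (c s)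
    rw [hU0, hc 0 s] at h
    have habs : |(0:ℝ) - s| = s := by
      rw [abs_of_nonpos (by linarith)]
      ring
    rw [habs] at h
    linarith
  have hV_ub : busemannF γ (c s) ≤ s := by
    have h := busemannF_le_dist_add hγ (c s) (c 0)
    rw [hc s 0, hc0, hγ0fwd] at h
    have habs : |s - (0:ℝ)| = s := by rw [sub_zero, abs_of_nonneg hs0]
    rw [habs] at h
    linarith
  -- foot of (c s) on γ
  obtain ⟨w, hw⟩ := exists_foot hγ (c s)
  have hax2 := hupper γ hγ (c s) w hw
  have hsβL_nn : 0 ≤ s*β/L := by positivity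
  have hi_key : 2 * Real.log (Real.cosh (dist (c s) (γ w))) ≤ s*β/L := by
    linarith [hax2.1, hax2.2, hV_ub, hUs_ub]
  have hi_nn : (0:ℝ) ≤ dist (c s) (γ w) := dist_nonneg
  have hi_bnd : dist (c s) (γ w) ≤ Bnd (s*β/(2*L)) := by
    apply le_Bnd_of_logcosh hi_nn
    have heq : s*β/(2*L) = (s*β/L)/2 := by ring
    rw [heq]
    linarith
  have hwv : busemannF (fun s' => γ (-s')) (γ w) = w := busemannF_rev_self hγ w
  have hw_close : |w + s| ≤ dist (c s) (γ w) + s*β/L := by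
    have h1 := abs_busemannF_sub_le hrevγ (γ w) (c s)
    rw [hwv] at h1
    have h2 : |busemannF (fun s' => γ (-s')) (c s) + s| ≤ s*β/L := by
      rw [abs_le]
      constructor
      · linarith [hUs_lb, hsβL_nn]
      · linarith [hUs_ub]
    have hsplit : w + s = (w - busemannF (fun s' => γ (-s')) (c s)) + (busemannF (fun s' => γ (-s')) (c s) + s) := by ring
    have h3 : |w + s| ≤ |w - busemannF (fun s' => γ (-s')) (c s)| + |busemannF (fun s' => γ (-s')) (c s) + s| := by
      rw [hsplit]
      exact abs_add_le _ _
    have h4 : dist (γ w) (c s) = dist (c s) (γ w) := dist_comm _ _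
    linarith [h1, h2, h3, h4]
  have hclose : dist (c s) (γ (-s)) ≤ 2 * dist (c s) (γ w) + s*β/L := by
    have h1 := dist_triangle (c s) (γ w) (γ (-s))
    have h2 : dist (γ w) (γ (-s)) = |w + s| := by
      rw [hγ w (-s), sub_neg_eq_add]
    rw [h2] at h1
    linarith [hw_close]
  -- final assembly
  have hfinal1 : dist p (γ (-s)) ≤ ρ + 2 * dist (c s) (γ w) + s*β/L := by
    have h1 := dist_triangle p (c s) (γ (-s))
    linarith [hDρ, hclose]
  have hφle : busemannF (fun s' => γ (-s')) p + busemannF γ p ≤ 2 * dist p (γ (-s)) := by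
    have h1 := busemannF_le_dist_add hrevγ p (γ (-s))
    have h2 := busemannF_le_dist_add hγ p (γ (-s))
    have h3 : busemannF (fun s' => γ (-s')) (γ (-s)) = -s := busemannF_rev_self hγ (-s)
    have h4 : busemannF γ (γ (-s)) = s := by
      have h := busemannF_self hγ (-s)
      rw [h]; ring
    rw [h3] at h1
    rw [h4] at h2
    linarith
  have hmono1 : s*β/L ≤ Sj*β/L := by gcongr
  have hmono2 : Bnd (s*β/(2*L)) ≤ Bnd (Sj*β/(2*L)) := by
    apply Bnd_mono
    gcongr
  linarith [hφle, hfinal1, hi_bnd, hmono1, hmono2]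

/-! ### Constancy: the backward Busemann function is affine along a
backward-asymptotic geodesic -/

theorem busemann_affine (hM : IsHadamard M) {α α' : ℝ → M}
    (hα : IsUnitSpeedGeodesic α) (hα' : IsUnitSpeedGeodesic α') {C : ℝ}
    (hbd : ∀ t ≤ (0:ℝ), dist (α t) (α' t) ≤ C) (t : ℝ) :
    busemannF (fun s => α (-s)) (α' t) = t + busemannF (fun s => α (-s)) (α' 0) := by
  have hrev := unit_rev hα
  have hcvx : Cvx (fun u => busemannF (fun s => α (-s)) (α' u) + ((-1) * u + 0)) :=
    (cvx_busemann hM hrev hα').add_affine (-1) 0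
  have hbound : ∀ u, busemannF (fun s => α (-s)) (α' u) + ((-1) * u + 0) ≤ C := by
    intro u
    set τ := max (-u) 0 with hτdef
    have hτ1 : -u ≤ τ := le_max_left _ _
    have hτ0 : (0:ℝ) ≤ τ := le_max_right _ _
    have h1 : busemannF (fun s => α (-s)) (α' u) ≤ dist (α' u) (α (-τ)) - τ :=
      busemannF_le_term hrev (α' u) τ
    have h2 := dist_triangle (α' u) (α' (-τ)) (α (-τ))
    have h3 : dist (α' u) (α' (-τ)) = u + τ := by
      rw [hα' u (-τ), abs_of_nonneg (by linarith : (0:ℝ) ≤ u - -τ)]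
      ring
    have h4 : dist (α' (-τ)) (α (-τ)) ≤ C := by
      rw [dist_comm]
      exact hbd (-τ) (by linarith)
    rw [h3] at h2
    linarith
  have := cvx_const_of_bddAbove hcvx hbound t 0
  linarith

/-! ### Part 2 -/

theorem part2 (hM : IsHadamard M) (hupper : SecLEneg1 M)
    {γ γ' : ℝ → M} (hγ : IsUnitSpeedGeodesic γ) (hγ' : IsUnitSpeedGeodesic γ')
    (hback : ∃ C : ℝ, ∀ t ≤ (0:ℝ), dist (γ t) (γ' t) ≤ C) :
    Tendsto (fun t => busemannF (fun s => γ (-s)) (γ' t) + busemannF γ (γ' t))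
      atBot (nhds 0) := by
  obtain ⟨C, hC⟩ := hback
  set b := busemannF (fun s => γ (-s)) (γ' 0) with hbdef
  have hu : ∀ t, busemannF (fun s => γ (-s)) (γ' t) = t + b :=
    busemann_affine hM hγ hγ' hC
  set bt := busemannF (fun s => γ' (-s)) (γ 0) with hbtdef
  have hbt : ∀ τ : ℝ, bt ≤ dist (γ 0) (γ' (-τ)) - τ := fun τ =>
    busemannF_le_term (unit_rev hγ') (γ 0) τ
  set e : ℝ → ℝ := fun τ => dist (γ 0) (γ' (-τ)) - τ - bt with hedef
  set φ : ℝ → ℝ := fun t => busemannF (fun s => γ (-s)) (γ' t) + busemannF γ (γ' t)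
    with hφdef
  have hφ0 : ∀ t, 0 ≤ φ t := by
    intro t
    have := busemannF_add_rev_nonneg hγ (γ' t)
    rw [hφdef]
    simp only
    linarith
  have hφcvx : Cvx φ :=
    Cvx.add (cvx_busemann hM (unit_rev hγ) hγ') (cvx_busemann hM hγ hγ')
  have hφbd : ∀ t ≤ (0:ℝ), φ t ≤ 2*C := by
    intro t ht
    have h1 := busemannF_le_dist_add (unit_rev hγ) (γ' t) (γ t)
    have h2 := busemannF_le_dist_add hγ (γ' t) (γ t)
    have h3 : busemannF (fun s => γ (-s)) (γ t) = t := busemannF_rev_self hγ t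
    have h4 : busemannF γ (γ t) = -t := busemannF_self hγ t
    have h5 : dist (γ' t) (γ t) ≤ C := by rw [dist_comm]; exact hC t ht
    rw [h3] at h1
    rw [h4] at h2
    rw [hφdef]
    simp only
    linarith
  have hmono : ∀ x y : ℝ, x ≤ y → y ≤ 0 → φ x ≤ φ y :=
    fun x y hxy hy0 => cvx_mono_left hφcvx hφbd hxy hy0
  -- the Busemann error e tends to 0
  have he_tend : Tendsto e atTop (nhds 0) := by
    have h1 : Tendsto (fun τ => dist (γ 0) ((fun s => γ' (-s)) τ) - τ) atTop (nhds bt) :=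
      tendsto_busemannF (unit_rev hγ') (γ 0)
    have h2 := h1.sub_const bt
    rw [sub_self] at h2
    exact h2
  -- smallness of φ along a sequence going to -∞
  have hsmall : ∀ ε > (0:ℝ), ∃ T : ℝ, T ≤ 0 ∧ φ T < ε := by
    intro ε hε
    have hBnd_tend : Tendsto (fun τ => Bnd (e τ / 2)) atTop (nhds 0) := by
      have h1 : Tendsto (fun τ => e τ / 2) atTop (nhds 0) := by
        have := he_tend.div_const 2
        simpa using this
      have h2 := (Bnd_continuous.tendsto 0).comp h1
      rw [Bnd_zero] at h2
      exact h2
    have hev : ∀ᶠ τ in atTop, Bnd (e τ / 2) < min 1 (ε/8) := by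
      have := hBnd_tend
      rw [Metric.tendsto_nhds] at this
      have hpos : (0:ℝ) < min 1 (ε/8) := by
        apply lt_min
        · norm_num
        · linarith
      filter_upwards [this _ hpos] with τ hτ
      rw [Real.dist_eq, sub_zero] at hτ
      calc Bnd (e τ / 2) ≤ |Bnd (e τ / 2)| := le_abs_self _
        _ < min 1 (ε/8) := hτ
    rw [eventually_atTop] at hev
    obtain ⟨J, hJ⟩ := hev
    set j := max J (|bt| + 2) with hjdef
    have hjJ : J ≤ j := le_max_left _ _
    have hjbt : |bt| + 2 ≤ j := le_max_right _ _
    have hj0 : (0:ℝ) ≤ j := le_trans (by positivity) hjbt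
    have hρsmall : Bnd (e j / 2) < min 1 (ε/8) := hJ j hjJ
    have h7 : Bnd (e j / 2) + |bt| < j := by
      have h1 : Bnd (e j / 2) < 1 := lt_of_lt_of_le hρsmall (min_le_left _ _)
      linarith
    refine ⟨-j, by linarith, ?_⟩
    -- φ (-j) ≤ 2 * Bnd (e j / 2)
    have hφj : φ (-j) ≤ 2 * Bnd (e j / 2) := by
      apply le_of_forall_pos_le_add
      intro μ hμ
      -- the k-dependent tail tends to 0
      set Sj := j + bt + e j + Bnd (e j / 2) with hSjdef
      have hγ0rev : busemannF (fun s => γ (-s)) (γ 0) = 0 := by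
        have := busemannF_rev_self hγ 0
        simpa using this
      have hLlb : ∀ k : ℝ, k - b ≤ dist (γ 0) (γ' (-k)) := by
        intro k
        have h1 := abs_busemannF_sub_le (unit_rev hγ) (γ 0) (γ' (-k))
        rw [hγ0rev, hu (-k)] at h1
        have h3 : k - b ≤ |(0:ℝ) - (-k + b)| := by
          have he' : (0:ℝ) - (-k + b) = k - b := by ring
          rw [he']
          exact le_abs_self _
        linarith
      have hL_tend : Tendsto (fun k : ℝ => dist (γ 0) (γ' (-k))) atTop atTop := by
        apply tendsto_atTop_mono hLlb
        exact tendsto_atTop_add_const_right atTop (-b) tendsto_id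
      have hinv : Tendsto (fun k : ℝ => (dist (γ 0) (γ' (-k)))⁻¹) atTop (nhds 0) :=
        tendsto_inv_atTop_zero.comp hL_tend
      have hβ_tend : Tendsto (fun k : ℝ => b + bt + e k) atTop (nhds (b + bt)) := by
        have := (tendsto_const_nhds (x := b + bt) (f := atTop (α := ℝ))).add he_tend
        simpa using this
      have hnum_tend : Tendsto (fun k : ℝ => Sj * (b + bt + e k) * (dist (γ 0) (γ' (-k)))⁻¹)
          atTop (nhds 0) := by
        have h1 := (hβ_tend.const_mul Sj).mul hinv
        simpa using h1
      have htail : Tendsto (fun k : ℝ =>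
          4 * Bnd (Sj * (b + bt + e k) / (2 * dist (γ 0) (γ' (-k))))
          + 2 * (Sj * (b + bt + e k) / dist (γ 0) (γ' (-k)))) atTop (nhds 0) := by
        have harg : ∀ k : ℝ, Sj * (b + bt + e k) / (2 * dist (γ 0) (γ' (-k)))
            = (Sj * (b + bt + e k) * (dist (γ 0) (γ' (-k)))⁻¹) / 2 := by
          intro k
          rw [div_eq_mul_inv, mul_inv, div_eq_mul_inv]
          ring
        have h1 : Tendsto (fun k : ℝ => Sj * (b + bt + e k) / (2 * dist (γ 0) (γ' (-k))))
            atTop (nhds 0) := by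
          simp only [harg]
          have := hnum_tend.div_const 2
          simpa using this
        have h2 : Tendsto (fun k : ℝ => Bnd (Sj * (b + bt + e k) / (2 * dist (γ 0) (γ' (-k)))))
            atTop (nhds 0) := by
          have h3 := (Bnd_continuous.tendsto 0).comp h1
          rw [Bnd_zero] at h3
          exact h3
        have h4 : Tendsto (fun k : ℝ => Sj * (b + bt + e k) / dist (γ 0) (γ' (-k)))
            atTop (nhds 0) := by
          have : (fun k : ℝ => Sj * (b + bt + e k) / dist (γ 0) (γ' (-k)))
              = fun k : ℝ => Sj * (b + bt + e k) * (dist (γ 0) (γ' (-k)))⁻¹ := by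
            funext k
            rw [div_eq_mul_inv]
          rw [this]
          exact hnum_tend
        have := (h2.const_mul 4).add (h4.const_mul 2)
        simpa using this
      have hev2 : ∀ᶠ k : ℝ in atTop,
          4 * Bnd (Sj * (b + bt + e k) / (2 * dist (γ 0) (γ' (-k))))
          + 2 * (Sj * (b + bt + e k) / dist (γ 0) (γ' (-k))) < μ := by
        rw [Metric.tendsto_nhds] at htail
        filter_upwards [htail μ hμ] with k hk
        rw [Real.dist_eq, sub_zero] at hk
        calc _ ≤ |4 * Bnd (Sj * (b + bt + e k) / (2 * dist (γ 0) (γ' (-k))))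
            + 2 * (Sj * (b + bt + e k) / dist (γ 0) (γ' (-k)))| := le_abs_self _
          _ < μ := hk
      rw [eventually_atTop] at hev2
      obtain ⟨K, hK⟩ := hev2
      set k := max K (max (j + e j + Bnd (e j / 2) + 1) (max j (b + 1))) with hkdef
      have hkK : K ≤ k := le_max_left _ _
      have hk8 : j + e j + Bnd (e j / 2) + 1 ≤ k :=
        le_trans (le_max_left _ _) (le_max_right _ _)
      have hkj : j ≤ k :=
        le_trans (le_trans (le_max_left _ _) (le_max_right _ _)) (le_max_right _ _)
      have hkb : b + 1 ≤ k :=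
        le_trans (le_trans (le_max_right _ _) (le_max_right _ _)) (le_max_right _ _)
      have hcore := part2_core hM hupper hγ hγ' hu hbt
        (rfl : e j = dist (γ 0) (γ' (-j)) - j - bt)
        (rfl : e k = dist (γ 0) (γ' (-k)) - k - bt)
        hj0 hkj h7 hk8 hkb
      have htail_k := hK k hkK
      calc φ (-j) ≤ 2 * Bnd (e j / 2)
            + 4 * Bnd ((j + bt + e j + Bnd (e j / 2)) * (b + bt + e k)
              / (2 * dist (γ 0) (γ' (-k))))
            + 2 * ((j + bt + e j + Bnd (e j / 2)) * (b + bt + e k)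
              / dist (γ 0) (γ' (-k))) := hcore
        _ ≤ 2 * Bnd (e j / 2) + μ := by
            rw [hSjdef] at htail_k
            linarith
    have hfin : 2 * Bnd (e j / 2) < ε := by
      have h1 : Bnd (e j / 2) < ε/8 := lt_of_lt_of_le hρsmall (min_le_right _ _)
      linarith
    exact lt_of_le_of_lt hφj hfin
  -- conclude
  rw [Metric.tendsto_nhds]
  intro ε hε
  obtain ⟨T, hT0, hTφ⟩ := hsmall ε hε
  rw [eventually_atBot]
  refine ⟨T, fun t ht => ?_⟩
  rw [Real.dist_eq, sub_zero, abs_of_nonneg (hφ0 t)]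
  exact lt_of_le_of_lt (hmono t T ht hT0) hTφ

/-! ### Part 1 -/

theorem part1 (hM : IsHadamard M) (hupper : SecLEneg1 M)
    {γ γ' : ℝ → M} (hγ : IsUnitSpeedGeodesic γ) (hγ' : IsUnitSpeedGeodesic γ')
    (hback : ∃ C : ℝ, ∀ t ≤ (0:ℝ), dist (γ t) (γ' t) ≤ C)
    (hfwd : ¬ ∃ C : ℝ, ∀ t ≥ (0:ℝ), dist (γ t) (γ' t) ≤ C) :
    ∃ d : ℝ, Tendsto
      (fun t => busemannF (fun s => γ (-s)) (γ' t) - busemannF γ (γ' t))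
      atTop (nhds d) := by
  obtain ⟨C, hC⟩ := hback
  have hC' : ∀ t ≤ (0:ℝ), dist (γ' t) (γ t) ≤ C := by
    intro t ht
    rw [dist_comm]
    exact hC t ht
  set b := busemannF (fun s => γ (-s)) (γ' 0) with hbdef
  have hu : ∀ t, busemannF (fun s => γ (-s)) (γ' t) = t + b :=
    busemann_affine hM hγ hγ' hC
  set btl := busemannF (fun s => γ' (-s)) (γ 0) with hbtldef
  have hut : ∀ σ, busemannF (fun s => γ' (-s)) (γ σ) = σ + btl :=
    busemann_affine hM hγ' hγ hC'
  -- feet of γ σ on γ'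
  choose st hst using fun σ : ℝ => exists_foot hγ' (γ σ)
  -- feet of γ' t on γ
  choose sf hsf using fun t : ℝ => exists_foot hγ (γ' t)
  have hcvxh : Cvx (fun t => dist (γ t) (γ' t)) := cvx_dist hM hγ hγ'
  -- Step 1: feet distances from γ to γ' tend to infinity (else forward asymptotic)
  have hDinf : ∀ R : ℝ, ∃ Sg : ℝ, ∀ σ ≥ Sg, R < dist (γ σ) (γ' (st σ)) := by
    intro R
    by_contra hcon
    push_neg at hcon
    -- for every Sg there is σ ≥ Sg with foot distance ≤ R
    apply hfwd
    refine ⟨max C (max (2*R + |btl|) C), fun t ht => ?_⟩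
    obtain ⟨σ, hσt, hσR⟩ := hcon t
    have hfootparam : |(σ + btl) - st σ| ≤ dist (γ σ) (γ' (st σ)) := by
      have h1 := abs_busemannF_sub_le (unit_rev hγ') (γ σ) (γ' (st σ))
      rw [hut σ, busemannF_rev_self hγ' (st σ)] at h1
      exact h1
    have hhσ : dist (γ σ) (γ' σ) ≤ 2*R + |btl| := by
      have h1 := dist_triangle (γ σ) (γ' (st σ)) (γ' σ)
      have h2 : dist (γ' (st σ)) (γ' σ) = |st σ - σ| := hγ' (st σ) σ
      have h3 : |st σ - σ| ≤ |btl| + dist (γ σ) (γ' (st σ)) := by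
        have h4 : st σ - σ = -( (σ + btl) - st σ) + btl := by ring
        rw [h4]
        calc |-((σ + btl) - st σ) + btl| ≤ |-((σ + btl) - st σ)| + |btl| := abs_add_le _ _
          _ = |(σ + btl) - st σ| + |btl| := by rw [abs_neg]
          _ ≤ dist (γ σ) (γ' (st σ)) + |btl| := by linarith [hfootparam]
          _ = |btl| + dist (γ σ) (γ' (st σ)) := by ring
      rw [h2] at h1
      linarith [hσR]
    have hmax := cvx_le_max hcvxh (show (-1:ℝ) ≤ t by linarith) hσt
    have hm1 : dist (γ (-1)) (γ' (-1)) ≤ C := hC (-1) (by norm_num)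
    rcases le_max_iff.mp hmax with h | h
    · exact le_trans (h.trans hm1) (le_max_left _ _)
    · exact le_trans (h.trans hhσ) (le_trans (le_max_left _ _) (le_max_right _ _))
  -- Step 2: the forward Busemann of γ' grows along γ
  obtain ⟨Sg, hSg⟩ := hDinf ((b + Real.log 2 + 1 + |btl| + 2*Real.log 2)/2)
  have hg4 : ∀ σ ≥ Sg, b + Real.log 2 < busemannF γ' (γ σ) + σ := by
    intro σ hσ
    have hax := hupper γ' hγ' (γ σ) (st σ) (hst σ)
    have h2 : st σ + Real.log (Real.cosh (dist (γ σ) (γ' (st σ)))) ≤ σ + btl := by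
      have := hax.2
      rw [hut σ] at this
      exact this
    have h3 := sub_log_two_le_logcosh (dist (γ σ) (γ' (st σ)))
    have h4 := hSg σ hσ
    have h5 := hax.1
    -- sum of the two axiom halves
    have h6 : 2 * Real.log (Real.cosh (dist (γ σ) (γ' (st σ))))
        ≤ busemannF γ' (γ σ) + σ + btl := by linarith [h5, h2]
    have hbtl : btl ≤ |btl| := le_abs_self btl
    linarith [h6, h3, h4, hbtl]
  -- Step 3: feet of γ' on γ are bounded above
  have hg5 : ∀ t, sf t < Sg := by
    intro t
    by_contra hcon
    push_neg at hcon
    have h1 := hg4 (sf t) hcon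
    have h2 : busemannF γ' (γ (sf t)) ≤ dist (γ' t) (γ (sf t)) - t := by
      have h3 := busemannF_le_term hγ' (γ (sf t)) t
      rw [dist_comm (γ (sf t)) (γ' t)] at h3
      exact h3
    have h4 : sf t + Real.log (Real.cosh (dist (γ' t) (γ (sf t)))) ≤ t + b := by
      have h5 := (hupper γ hγ (γ' t) (sf t) (hsf t)).2
      rw [hu t] at h5
      exact h5
    have h6 := sub_log_two_le_logcosh (dist (γ' t) (γ (sf t)))
    linarith [h1, h2, h4, h6]
  -- Step 4: linear lower bound on v t := busemannF γ (γ' t) for t ≥ 0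
  set c₀ := dist (γ' 0) (γ 0) with hc₀def
  set K0 := max (|Sg| + 1) (|b - c₀| + 1) with hK0def
  have hsf_abs : ∀ t ≥ (0:ℝ), |sf t| ≤ K0 := by
    intro t ht
    have h1 : sf t ≤ Sg := (hg5 t).le
    have hDub : dist (γ' t) (γ (sf t)) ≤ t + c₀ := by
      rw [hsf t]
      calc infDist (γ' t) (range γ) ≤ dist (γ' t) (γ 0) := infDist_le_dist_of_mem ⟨0, rfl⟩
        _ ≤ dist (γ' t) (γ' 0) + dist (γ' 0) (γ 0) := dist_triangle _ _ _
        _ = |t - 0| + c₀ := by rw [hγ' t 0]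
        _ = t + c₀ := by rw [sub_zero, abs_of_nonneg ht]
    have hulb : t + b ≤ dist (γ' t) (γ (sf t)) + sf t := by
      have h2 : busemannF (fun s => γ (-s)) (γ' t)
          ≤ dist (γ' t) (γ (sf t)) - -(sf t) := by
        have h3 : busemannF (fun s => γ (-s)) (γ' t)
            ≤ dist (γ' t) (γ (- -(sf t))) - -(sf t) :=
          busemannF_le_term (unit_rev hγ) (γ' t) (-(sf t))
        rw [neg_neg] at h3
        exact h3
      rw [hu t] at h2
      linarith
    have hslb : b - c₀ ≤ sf t := by linarith
    rw [abs_le]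
    constructor
    · have : -(|b - c₀| + 1) ≤ b - c₀ := by
        have := neg_le_abs (b - c₀)
        linarith [abs_nonneg (b - c₀)]
      have hK : |b - c₀| + 1 ≤ K0 := le_max_right _ _
      linarith
    · have h4 : Sg ≤ |Sg| := le_abs_self Sg
      have hK : |Sg| + 1 ≤ K0 := le_max_left _ _
      linarith
  have hvlb : ∀ t ≥ (0:ℝ), t - (2*K0 + c₀ + Real.log 2) ≤ busemannF γ (γ' t) := by
    intro t ht
    have h1 := (hupper γ hγ (γ' t) (sf t) (hsf t)).1
    have h2 := sub_log_two_le_logcosh (dist (γ' t) (γ (sf t)))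
    have hDlb : t - c₀ - |sf t| ≤ dist (γ' t) (γ (sf t)) := by
      have h3 := dist_triangle (γ' t) (γ (sf t)) (γ 0)
      have h4 := dist_triangle (γ' t) (γ 0) (γ' 0)
      have h5 : dist (γ (sf t)) (γ 0) = |sf t| := by
        rw [hγ (sf t) 0, sub_zero]
      have h6 : dist (γ' t) (γ' 0) = t := by
        rw [hγ' t 0, sub_zero, abs_of_nonneg ht]
      have h7 := dist_triangle (γ' t) (γ 0) (γ 0)
      -- dist (γ' t) (γ' 0) ≤ dist (γ' t) (γ (sf t)) + dist (γ (sf t)) (γ 0) + dist (γ 0) (γ' 0)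
      have h8 := dist_triangle (γ' t) (γ (sf t)) (γ' 0)
      have h9 := dist_triangle (γ (sf t)) (γ 0) (γ' 0)
      have h10 : dist (γ 0) (γ' 0) = c₀ := by rw [dist_comm, hc₀def]
      rw [h6] at h8
      rw [h5, h10] at h9
      linarith
    have habs := hsf_abs t ht
    have h11 : -K0 ≤ sf t ∧ sf t ≤ K0 := abs_le.mp habs
    linarith [h1, h2, hDlb, h11.1, h11.2]
  -- Step 5: η := t - v t is concave, bounded on [0,∞), hence has a limit
  set Kv := 2*K0 + c₀ + Real.log 2 with hKvdef
  have hψcvx : Cvx (fun t => busemannF γ (γ' t) + ((-1) * t + 0)) :=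
    (cvx_busemann hM hγ hγ').add_affine (-1) 0
  have hχcvx : Cvx (fun t => busemannF γ (γ' (-t)) + ((-1) * (-t) + 0)) := by
    have := hψcvx.comp_neg
    simpa using this
  have hχbd : ∀ t ≤ (0:ℝ), busemannF γ (γ' (-t)) + ((-1) * (-t) + 0)
      ≤ busemannF γ (γ' 0) := by
    intro t ht
    have h1 := busemannF_le_dist_add hγ (γ' (-t)) (γ' 0)
    have h2 : dist (γ' (-t)) (γ' 0) = -t := by
      rw [hγ' (-t) 0, sub_zero, abs_of_nonneg (by linarith)]
    rw [h2] at h1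
    linarith
  -- ψ is nonincreasing on [0, ∞)
  have hψanti : ∀ x y : ℝ, 0 ≤ x → x ≤ y →
      busemannF γ (γ' y) - y ≤ busemannF γ (γ' x) - x := by
    intro x y hx hxy
    have := cvx_mono_left hχcvx hχbd (show -y ≤ -x by linarith) (show -x ≤ 0 by linarith)
    simp only [neg_neg] at this
    linarith
  -- η is nondecreasing on [0,∞), bounded above by Kv
  set η : ℝ → ℝ := fun t => t - busemannF γ (γ' t) with hηdef
  have hηmono : ∀ x y : ℝ, 0 ≤ x → x ≤ y → η x ≤ η y := by
    intro x y hx hxy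
    have := hψanti x y hx hxy
    rw [hηdef]
    simp only
    linarith
  have hηbd : ∀ t ≥ (0:ℝ), η t ≤ Kv := by
    intro t ht
    have := hvlb t ht
    rw [hηdef]
    simp only
    rw [hKvdef]
    linarith
  set ηh : ℝ → ℝ := fun t => η (max t 0) with hηhdef
  have hηhmono : Monotone ηh := by
    intro s t hstle
    have h1 : max s 0 ≤ max t 0 := max_le_max hstle le_rfl
    exact hηmono (max s 0) (max t 0) (le_max_right _ _) h1
  have hηhbdd : BddAbove (range ηh) := by
    refine ⟨Kv, ?_⟩
    rintro x ⟨t, rfl⟩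
    exact hηbd (max t 0) (le_max_right _ _)
  have hlim : Tendsto ηh atTop (nhds (⨆ t, ηh t)) :=
    tendsto_atTop_ciSup hηhmono hηhbdd
  refine ⟨b + ⨆ t, ηh t, ?_⟩
  have hfinal : Tendsto (fun t => b + ηh t) atTop (nhds (b + ⨆ t, ηh t)) :=
    hlim.const_add b
  apply hfinal.congr'
  rw [EventuallyEq, eventually_atTop]
  refine ⟨0, fun t ht => ?_⟩
  have hmax : max t 0 = t := max_eq_left ht
  rw [hηhdef]
  simp only
  rw [hmax, hηdef]
  simp only
  rw [hu t]
  ring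

end BAux

/-- in a Cartan–Hadamard space with pinched curvature
`−4 ≤ κ ≤ −1`, if `γ, γ'` are geodesic lines with `γ(−∞) = γ'(−∞)` (backward
asymptotic) but `γ(+∞) ≠ γ'(+∞)` (not forward asymptotic), then
`(f_{−γ} − f_γ)(γ'(t))` converges to some constant `d` as `t → +∞`, and
`(f_{−γ} + f_γ)(γ'(t)) → 0` as `t → −∞`. -/
theorem busemann_sum_difference_asymptotics (M : Type*) [MetricSpace M]
    (hM : IsHadamard M) (hupper : SecLEneg1 M) (hlower : SecGEneg4 M)
    (γ γ' : ℝ → M) (hγ : IsUnitSpeedGeodesic γ) (hγ' : IsUnitSpeedGeodesic γ')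
    (hback : ∃ C : ℝ, ∀ t ≤ (0 : ℝ), dist (γ t) (γ' t) ≤ C)
    (hfwd : ¬ ∃ C : ℝ, ∀ t ≥ (0 : ℝ), dist (γ t) (γ' t) ≤ C) :
    (∃ d : ℝ, Tendsto
      (fun t => busemannF (fun s => γ (-s)) (γ' t) - busemannF γ (γ' t))
      atTop (nhds d)) ∧
    Tendsto (fun t => busemannF (fun s => γ (-s)) (γ' t) + busemannF γ (γ' t))
      atBot (nhds 0) := by
  constructor
  · exact BAux.part1 hM hupper hγ hγ' hback hfwd
  · exact BAux.part2 hM hupper hγ hγ' hback
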